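/- Existence of the exact modified Hamiltonian for the symplectic Euler method for the harmonic oscillator (instance of Proposition 1(a)): let h ≠ 0 with cos h ≠ 0, and define Ĥ_SE(P,Q) = (sin h·(P² + Q²)/2 + (1 − cos h)·P·Q)/(h·cos h). Then for every (p₀,q₀) ∈ ℝ², setting p₁ = p₀·cos h − q₀·sin h and q₁ = p₀·sin h + q₀·cos h (the exact time-h harmonic-oscillator flow), one has −∂Ĥ_SE/∂Q(p₁, q₀) = (p₁ − p₀)/h and ∂Ĥ_SE/∂P(p₁, q₀) = (q₁ − q₀)/h. -/

import Mathlib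

noncomputable section

/-- The modified Hamiltonian of the symplectic Euler method with step `h` for the
harmonic oscillator. -/
def HSE (h P Q : ℝ) : ℝ :=
  (Real.sin h * (P ^ 2 + Q ^ 2) / 2 + (1 - Real.cos h) * P * Q) / (h * Real.cos h)

lemma derivQ (h P q : ℝ) :
    HasDerivAt (fun Q => HSE h P Q)
      ((Real.sin h * q + (1 - Real.cos h) * P) / (h * Real.cos h)) q := by
  unfold HSE
  have h1 : HasDerivAt (fun Q : ℝ =>
      Real.sin h * (P ^ 2 + Q ^ 2) / 2 + (1 - Real.cos h) * P * Q)
      (Real.sin h * q + (1 - Real.cos h) * P) q := by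
    have := ((((hasDerivAt_pow 2 q).const_add (P ^ 2)).const_mul (Real.sin h)).div_const
      2).add ((hasDerivAt_id q).const_mul ((1 - Real.cos h) * P))
    exact this.congr_deriv (by simp; ring)
  exact h1.div_const _

lemma derivP (h Q p : ℝ) :
    HasDerivAt (fun P => HSE h P Q)
      ((Real.sin h * p + (1 - Real.cos h) * Q) / (h * Real.cos h)) p := by
  unfold HSE
  have h1 : HasDerivAt (fun P : ℝ =>
      Real.sin h * (P ^ 2 + Q ^ 2) / 2 + (1 - Real.cos h) * P * Q) 
      (Real.sin h * p + (1 - Real.cos h) * Q) p := by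
    have := ((((hasDerivAt_pow 2 p).add_const (Q ^ 2)).const_mul (Real.sin h)).div_const
      2).add (((hasDerivAt_id p).const_mul (1 - Real.cos h)).mul_const Q)
    exact this.congr_deriv (by simp; ring)
  exact h1.div_const _

/-- existence of the exact modified Hamiltonian for the symplectic Euler
method for the harmonic oscillator: along the exact time-`h` flow
`(p₁, q₁) = (p₀ cos h − q₀ sin h, p₀ sin h + q₀ cos h)` one has
`−∂Ĥ_SE/∂Q(p₁, q₀) = (p₁ − p₀)/h` and `∂Ĥ_SE/∂P(p₁, q₀) = (q₁ − q₀)/h`. -/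
theorem stmt8 (h : ℝ) (hh : h ≠ 0) (hcos : Real.cos h ≠ 0) :
    ∀ p₀ q₀ p₁ q₁ : ℝ,
      p₁ = p₀ * Real.cos h - q₀ * Real.sin h →
      q₁ = p₀ * Real.sin h + q₀ * Real.cos h →
      -(deriv (fun Q => HSE h p₁ Q) q₀) = (p₁ - p₀) / h ∧
        deriv (fun P => HSE h P q₀) p₁ = (q₁ - q₀) / h := by
  intro p₀ q₀ p₁ q₁ hp hq
  have pyth := Real.sin_sq_add_cos_sq h
  constructor
  · rw [(derivQ h p₁ q₀).deriv, hp]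
    field_simp
    ring
  · rw [(derivP h q₀ p₁).deriv, hp, hq]
    field_simp
    linear_combination (-q₀) * pyth
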